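/- Let A be an algebra with local near unanimity term operations of arity k+1. Then for every r > k, every subalgebra R of A^r is uniquely determined by its projections onto all k-element subsets of coordinates: if a ∈ A^r agrees with some element of R on every k-element set of coordinates, then a ∈ R. -/

import Mathlib

/-- If `A` has local near unanimity term operations of arity `k+1`, then every
subalgebra of `A^r` (`r > k`) is determined by its projections onto `k`-element
subsets of coordinates. -/
theorem stmt_15 {A : Type*} {k r : ℕ} (hr : k < r)
    (Clo : Set ((Fin (k + 1) → A) → A))
    (hlocnu : ∀ S : Finset A, ∃ nS ∈ Clo, ∀ a ∈ S, ∀ b ∈ S, ∀ i : Fin (k + 1),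
      nS (fun j => if j = i then b else a) = a)
    (R : Set (Fin r → A))
    (hclosed : ∀ f ∈ Clo, ∀ ts : Fin (k + 1) → (Fin r → A),
      (∀ j, ts j ∈ R) → (fun c => f (fun j => ts j c)) ∈ R)
    (a : Fin r → A)
    (ha : ∀ I : Finset (Fin r), I.card = k → ∃ b ∈ R, ∀ i ∈ I, b i = a i) :
    a ∈ R := by
  classical
  have aux : ∀ m : ℕ, ∀ I : Finset (Fin r), I.card = k + m →
      ∃ b ∈ R, ∀ i ∈ I, b i = a i := by
    intro m
    induction m with
    | zero => intro I hI; exact ha I (by simpa using hI)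
    | succ m ih =>
      intro I hI
      obtain ⟨J, hJI, hJ⟩ := Finset.exists_subset_card_eq (s := I) (n := k + 1)
        (by omega)
      set e := J.orderIsoOfFin hJ with he
      set ei : Fin (k + 1) → Fin r := fun j => (e j : Fin r) with hei
      have hei_inj : Function.Injective ei := by
        intro j j' h
        exact e.injective (Subtype.ext h)
      have hei_mem : ∀ j, ei j ∈ I := fun j => hJI (e j).2
      have hb : ∀ j : Fin (k + 1), ∃ b ∈ R, ∀ i ∈ I \ {ei j}, b i = a i := by
        intro j
        apply ih
        rw [Finset.card_sdiff_of_subset (by simpa using hei_mem j)]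
        simp [hI]
      choose b hbR hba using hb
      set S : Finset A :=
        (Finset.univ.image fun p : Fin (k + 1) × Fin r => b p.1 p.2) ∪
          Finset.univ.image a with hS
      obtain ⟨nS, hnClo, hn⟩ := hlocnu S
      refine ⟨fun c => nS fun j => b j c, hclosed nS hnClo b hbR, ?_⟩
      intro c hc
      have haS : a c ∈ S := by
        simp [hS]
      have hbS : ∀ j, b j c ∈ S := by
        intro j
        simp only [hS, Finset.mem_union, Finset.mem_image, Finset.mem_univ]
        exact Or.inl ⟨(j, c), by simp⟩
      by_cases hcJ : ∃ j0, ei j0 = c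
      · obtain ⟨j0, rfl⟩ := hcJ
        have heq : (fun j => b j (ei j0)) =
            fun j => if j = j0 then b j0 (ei j0) else a (ei j0) := by
          funext j
          by_cases h : j = j0
          · simp [h]
          · simp only [if_neg h]
            exact hba j _ (Finset.mem_sdiff.2 ⟨hei_mem j0, by
              simp only [Finset.mem_singleton]
              exact fun hcontra => h (hei_inj hcontra.symm)⟩)
        show nS (fun j => b j (ei j0)) = a (ei j0)
        rw [heq]
        exact hn _ haS _ (hbS j0) j0
      · have heq : (fun j => b j c) = fun _ => a c := by
          funext j
          exact hba j c (Finset.mem_sdiff.2 ⟨hc, by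
            simp only [Finset.mem_singleton]
            exact fun hcontra => hcJ ⟨j, hcontra.symm⟩⟩)
        show nS (fun j => b j c) = a c
        rw [heq]
        simpa using hn _ haS _ haS 0
  obtain ⟨b, hbR, hba⟩ := aux (r - k) Finset.univ (by simp; omega)
  have : b = a := funext fun i => hba i (Finset.mem_univ i)
  exact this ▸ hbR
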